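/- Let $\mathcal{P}_n$ satisfy $\mathcal{P}_{n+1}(x)=(x-c_n)\mathcal{P}_n(x)-\lambda_n x\,\mathcal{P}_{n-1}(x)$ with $c_n>0$, $\lambda_n>0$, $\mathcal{P}_{-1}=0$, $\mathcal{P}_0=1$. Denote by $x^{(n)}_1 < x^{(n)}_2 < \cdots < x^{(n)}_n$ the zeros of $\mathcal{P}_n$. Then the interlacing property holds: $0 < x^{(n+1)}_1 < x^{(n)}_1 < x^{(n+1)}_2 < x^{(n)}_2 < \cdots < x^{(n+1)}_n < x^{(n)}_n < x^{(n+1)}_{n+1}$ for all $n\geq 1$. -/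

import Mathlib

open Polynomial

lemma eval_prodXC {m : ℕ} (f : Fin m → ℝ) (x : ℝ) :
    eval x (∏ i, (X - C (f i))) = ∏ i, (x - f i) := by
  simp [eval_prod]

lemma prodXC_monic {m : ℕ} (f : Fin m → ℝ) : (∏ i, (X - C (f i))).Monic :=
  monic_prod_of_monic _ _ fun i _ => monic_X_sub_C _

lemma prodXC_natDegree {m : ℕ} (f : Fin m → ℝ) : (∏ i, (X - C (f i))).natDegree = m := by
  rw [natDegree_prod_of_monic _ _ fun i _ => monic_X_sub_C _]
  simp

lemma sign_prod {m : ℕ} (f : Fin m → ℝ) (x : ℝ) (i : ℕ)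
    (h1 : ∀ j : Fin m, (j : ℕ) < i → f j < x)
    (h2 : ∀ j : Fin m, i ≤ (j : ℕ) → x < f j) :
    0 < (-1 : ℝ) ^ (m - i) * ∏ j, (x - f j) := by
  induction m with
  | zero => simp
  | succ m ih =>
    rcases le_or_gt (m + 1) i with hi | hi
    · rw [Nat.sub_eq_zero_of_le hi, pow_zero, one_mul]
      exact Finset.prod_pos fun j _ => sub_pos.2 (h1 j (lt_of_lt_of_le j.isLt hi))
    · have hi' : i ≤ m := Nat.lt_succ_iff.mp hi
      rw [Fin.prod_univ_castSucc]
      have hlast : x < f (Fin.last m) := h2 _ (by simp [hi'])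
      have IH := ih (fun j => f j.castSucc)
        (fun j hj => h1 j.castSucc (by simpa using hj))
        (fun j hj => h2 j.castSucc (by simpa using hj))
      have he : m + 1 - i = (m - i) + 1 := by omega
      rw [he, pow_succ]
      have hr : (-1 : ℝ) ^ (m - i) * -1 *
          ((∏ j : Fin m, (x - f j.castSucc)) * (x - f (Fin.last m))) =
          ((-1 : ℝ) ^ (m - i) * ∏ j : Fin m, (x - f j.castSucc)) * (f (Fin.last m) - x) := by
        ring
      rw [hr]
      exact mul_pos IH (sub_pos.2 hlast)

lemma eq_prod_of_roots {m : ℕ} {p : ℝ[X]} (hm : p.Monic) (hd : p.natDegree = m)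
    {t : Fin m → ℝ} (ht : Function.Injective t) (h0 : ∀ i, eval (t i) p = 0) :
    p = ∏ i, (X - C (t i)) := by
  have hp0 : p ≠ 0 := hm.ne_zero
  set T : Finset ℝ := Finset.image t Finset.univ with hT
  have hTcard : T.card = m := by
    rw [hT, Finset.card_image_of_injective _ ht, Finset.card_univ, Fintype.card_fin]
  have hle : T.val ≤ p.roots := by
    rw [Multiset.le_iff_subset T.nodup]
    intro a ha
    rw [Finset.mem_val, hT, Finset.mem_image] at ha
    obtain ⟨i, -, rfl⟩ := ha
    exact (mem_roots hp0).2 (h0 i)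
  have hcard : Multiset.card p.roots = p.natDegree := by
    have h1 : Multiset.card p.roots ≤ p.natDegree := p.card_roots'
    have h2 : m ≤ Multiset.card p.roots := by
      have := Multiset.card_le_card hle
      simpa [hTcard] using this
    omega
  have heq : p.roots = T.val :=
    (Multiset.eq_of_le_of_card_le hle (by rw [hcard, hd, ← hTcard]; rfl)).symm
  have hprod := prod_multiset_X_sub_C_of_monic_of_roots_card_eq hm hcard
  rw [heq] at hprod
  rw [← hprod]
  have h3 : ((T.val.map fun a => X - C a).prod : ℝ[X]) = ∏ a ∈ T, (X - C a) := rfl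
  rw [h3, hT, Finset.prod_image (fun a _ b _ h => ht h)]

lemma strictMono_prod_inj {m : ℕ} {f g : Fin m → ℝ} (hf : StrictMono f) (hg : StrictMono g)
    (h : (∏ i, (X - C (f i))) = ∏ i, (X - C (g i))) : f = g := by
  have key : ∀ (f g : Fin m → ℝ), (∏ i, (X - C (f i))) = (∏ i, (X - C (g i))) →
      Set.range f ⊆ Set.range g := by
    intro f g hfg
    rintro _ ⟨i, rfl⟩
    have hz : eval (f i) (∏ j, (X - C (g j))) = 0 := by
      rw [← hfg, eval_prodXC]
      exact Finset.prod_eq_zero (Finset.mem_univ i) (by ring)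
    rw [eval_prodXC] at hz
    obtain ⟨j, -, hj⟩ := Finset.prod_eq_zero_iff.mp hz
    exact ⟨j, by linarith [sub_eq_zero.mp hj]⟩
  haveI : WellFoundedLT (Fin m) := inferInstance
  exact (hf.range_inj hg).1 (Set.Subset.antisymm (key f g h) (key g f h.symm))

lemma exists_root_Ioo (q : ℝ[X]) {a b : ℝ} (hab : a < b) (h : eval a q * eval b q < 0) :
    ∃ x ∈ Set.Ioo a b, eval x q = 0 := by
  have hcont : ContinuousOn (fun x => eval x q) (Set.Icc a b) :=
    (Polynomial.continuous q).continuousOn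
  rcases mul_neg_iff.mp h with ⟨ha, hb⟩ | ⟨ha, hb⟩
  · obtain ⟨x, hx, hx0⟩ := intermediate_value_Ioo' hab.le hcont (Set.mem_Ioo.2 ⟨hb, ha⟩)
    exact ⟨x, hx, hx0⟩
  · obtain ⟨x, hx, hx0⟩ := intermediate_value_Ioo hab.le hcont (Set.mem_Ioo.2 ⟨ha, hb⟩)
    exact ⟨x, hx, hx0⟩

lemma key_package (c lam : ℕ → ℝ)
    (hc : ∀ n, 0 < c n) (hlam : ∀ n, 0 < lam n)
    (P : ℕ → Polynomial ℝ)
    (hP0 : P 0 = 1) (hP1 : P 1 = X - C (c 0))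
    (hP : ∀ n, P (n + 2) = (X - C (c (n + 1))) * P (n + 1) - C (lam (n + 1)) * X * P n) :
    ∀ k : ℕ, ∃ (r : Fin k → ℝ) (s : Fin (k + 1) → ℝ),
      StrictMono r ∧ StrictMono s ∧ 0 < s 0 ∧
      P k = ∏ i, (X - C (r i)) ∧ P (k + 1) = ∏ i, (X - C (s i)) ∧
      ∀ i : Fin k, s i.castSucc < r i ∧ r i < s i.succ := by
  intro k
  induction k with
  | zero =>
    refine ⟨Fin.elim0, fun _ => c 0, fun a => a.elim0, (by haveI : Subsingleton (Fin 1) := Fin.subsingleton_one; exact Subsingleton.strictMono _), hc 0,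
      ?_, ?_, fun i => i.elim0⟩
    · rw [hP0]; simp
    · rw [hP1, Fin.prod_univ_one]
  | succ k ih =>
    obtain ⟨r, s, hr, hs, hs0, hrP, hsP, hint⟩ := ih
    have hspos : ∀ i, 0 < s i := fun i => lt_of_lt_of_le hs0 (hs.monotone (Fin.zero_le i))
    have hQrec := hP k
    rw [hsP] at hQrec
    have hmon1 : ((X - C (c (k + 1))) * ∏ i, (X - C (s i))).Monic :=
      (monic_X_sub_C _).mul (prodXC_monic s)
    have hdeg1 : ((X - C (c (k + 1))) * ∏ i, (X - C (s i))).natDegree = k + 2 := by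
      rw [(monic_X_sub_C _).natDegree_mul (prodXC_monic s), natDegree_X_sub_C, prodXC_natDegree]
      omega
    have hdlt : (C (lam (k + 1)) * X * P k).degree <
        ((X - C (c (k + 1))) * ∏ i, (X - C (s i))).degree := by
      have hb : (C (lam (k + 1)) * X * P k).natDegree ≤ k + 1 := by
        refine le_trans natDegree_mul_le ?_
        have hb1 : (C (lam (k + 1)) * X).natDegree ≤ 1 := le_trans natDegree_mul_le (by simp)
        have hb2 : (P k).natDegree = k := by rw [hrP, prodXC_natDegree]
        omega
      calc (C (lam (k + 1)) * X * P k).degree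
          ≤ ((C (lam (k + 1)) * X * P k).natDegree : WithBot ℕ) := degree_le_natDegree
        _ ≤ ((k + 1 : ℕ) : WithBot ℕ) := by exact_mod_cast hb
        _ < ((k + 2 : ℕ) : WithBot ℕ) := by exact_mod_cast Nat.lt_succ_self _
        _ = _ := by rw [degree_eq_natDegree hmon1.ne_zero, hdeg1]
    have hQmonic : (P (k + 2)).Monic := by
      rw [hQrec]; exact hmon1.sub_of_left hdlt
    have hQdeg : (P (k + 2)).natDegree = k + 2 := by
      rw [hQrec, natDegree_eq_of_degree_eq (degree_sub_eq_left_of_degree_lt hdlt), hdeg1]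
    -- choose M beyond the last root with positive value
    have hdegpos : 0 < (P (k + 2)).degree := by
      rw [degree_eq_natDegree hQmonic.ne_zero, hQdeg]
      exact_mod_cast Nat.succ_pos (k + 1)
    obtain ⟨M, hM1, hM2⟩ : ∃ M, s (Fin.last k) < M ∧ 0 < eval M (P (k + 2)) := by
      have htend := (P (k + 2)).tendsto_atTop_of_leadingCoeff_nonneg hdegpos
        (by rw [hQmonic.leadingCoeff]; norm_num)
      obtain ⟨M, hM⟩ := ((Filter.eventually_gt_atTop (s (Fin.last k))).and
        (htend.eventually_gt_atTop 0)).exists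
      exact ⟨M, hM.1, hM.2⟩
    set v : Fin (k + 2) → ℝ := (Fin.snoc s M : Fin (k + 2) → ℝ) with hv_def
    set u : Fin (k + 3) → ℝ := Fin.cons 0 v with hu_def
    have hu0 : u 0 = 0 := by rw [hu_def]; simp [Fin.cons_zero]
    have huS : ∀ j : Fin (k + 2), u j.succ = v j := by
      intro j; rw [hu_def]; simp [Fin.cons_succ]
    have huC : ∀ i : Fin (k + 1), u i.castSucc.succ = s i := by
      intro i; rw [huS, hv_def, Fin.snoc_castSucc]
    have hadj : ∀ i : Fin (k + 2), u i.castSucc < u i.succ := by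
      intro i
      induction i using Fin.cases with
      | zero =>
        have h1 : u (Fin.castSucc 0) = 0 := by rw [Fin.castSucc_zero]; exact hu0
        have h2 : u (Fin.succ 0) = s 0 := by
          have : (0 : Fin (k + 2)) = Fin.castSucc 0 := by simp
          rw [this, huC]
        rw [h1, h2]; exact hs0
      | succ i =>
        have hl : u (Fin.castSucc i.succ) = s i := by rw [← Fin.succ_castSucc, huC]
        rw [hl, huS, hv_def]
        induction i using Fin.lastCases with
        | last => rw [Fin.succ_last, Fin.snoc_last]; exact hM1
        | cast i' =>
          rw [Fin.succ_castSucc, Fin.snoc_castSucc]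
          exact hs Fin.castSucc_lt_succ
    have humono : StrictMono u := Fin.strictMono_iff_lt_succ.2 hadj
    -- sign at 0
    have hsign0 : 0 < (-1 : ℝ) ^ (k + 2) * eval 0 (P (k + 2)) := by
      have hprod := sign_prod s 0 0 (fun j hj => absurd hj (by omega)) (fun j _ => hspos j)
      have heval0 : eval 0 (P (k + 2)) = -(c (k + 1)) * ∏ j, ((0 : ℝ) - s j) := by
        rw [hQrec]
        simp [eval_prod]
      rw [heval0]
      have hre : (-1 : ℝ) ^ (k + 2) * (-(c (k + 1)) * ∏ j, ((0 : ℝ) - s j)) =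
          c (k + 1) * ((-1 : ℝ) ^ (k + 1) * ∏ j, ((0 : ℝ) - s j)) := by
        rw [pow_succ]; ring
      rw [hre]
      exact mul_pos (hc _) (by simpa using hprod)
    -- sign at s i
    have hsignS : ∀ i : Fin (k + 1), 0 < (-1 : ℝ) ^ (k + 1 - (i : ℕ)) * eval (s i) (P (k + 2)) := by
      intro i
      have hzero : eval (s i) (∏ j, (X - C (s j))) = 0 := by
        rw [eval_prodXC]
        exact Finset.prod_eq_zero (Finset.mem_univ i) (by ring)
      have heval : eval (s i) (P (k + 2)) = -(lam (k + 1)) * (s i * ∏ j, (s i - r j)) := by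
        rw [hQrec, eval_sub, eval_mul, hzero, mul_zero, eval_mul, eval_mul, eval_C, eval_X,
          hrP, eval_prodXC]
        ring
      have hprod := sign_prod r (s i) (i : ℕ)
        (fun j hj => lt_of_lt_of_le (hint j).2 (hs.monotone (by
          rw [Fin.le_def, Fin.val_succ]; omega)))
        (fun j hj => lt_of_le_of_lt (hs.monotone (by
          rw [Fin.le_def, Fin.coe_castSucc]; omega)) (hint j).1)
      rw [heval]
      have he : k + 1 - (i : ℕ) = (k - (i : ℕ)) + 1 := by
        have := i.isLt; omega
      rw [he, pow_succ]
      have hre : (-1 : ℝ) ^ (k - (i : ℕ)) * -1 * (-(lam (k + 1)) * (s i * ∏ j, (s i - r j))) =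
          (lam (k + 1) * s i) * ((-1 : ℝ) ^ (k - (i : ℕ)) * ∏ j, (s i - r j)) := by ring
      rw [hre]
      exact mul_pos (mul_pos (hlam _) (hspos i)) hprod
    -- uniform sign statement
    have hsignU : ∀ j : Fin (k + 3), 0 < (-1 : ℝ) ^ (k + 2 - (j : ℕ)) * eval (u j) (P (k + 2)) := by
      intro j
      induction j using Fin.cases with
      | zero =>
        rw [hu0]
        simpa using hsign0
      | succ j =>
        rw [huS, hv_def]
        induction j using Fin.lastCases with
        | last =>
          rw [Fin.snoc_last]
          have hv : k + 2 - ((Fin.succ (Fin.last (k + 1)) : Fin (k + 3)) : ℕ) = 0 := by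
            simp
          rw [hv, pow_zero, one_mul]
          exact hM2
        | cast i =>
          rw [Fin.snoc_castSucc]
          have hv : k + 2 - ((Fin.succ (Fin.castSucc i) : Fin (k + 3)) : ℕ) = k + 1 - (i : ℕ) := by
            rw [Fin.val_succ, Fin.coe_castSucc]
            omega
          rw [hv]
          exact hsignS i
    -- roots in each interval
    have hroot : ∀ i : Fin (k + 2),
        ∃ x, x ∈ Set.Ioo (u i.castSucc) (u i.succ) ∧ eval x (P (k + 2)) = 0 := by
      intro i
      have hab : u i.castSucc < u i.succ := hadj i
      have hA := hsignU i.castSucc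
      have hB := hsignU i.succ
      set e := k + 2 - ((i : ℕ) + 1) with he_def
      have heA : k + 2 - ((i.castSucc : Fin (k + 3)) : ℕ) = e + 1 := by
        rw [Fin.coe_castSucc, he_def]
        have := i.isLt; omega
      have heB : k + 2 - ((i.succ : Fin (k + 3)) : ℕ) = e := by
        rw [Fin.val_succ]
      rw [heA] at hA
      rw [heB] at hB
      have hexp : (-1 : ℝ) ^ (e + 1) = -((-1 : ℝ) ^ e) := by rw [pow_succ]; ring
      rw [hexp] at hA
      have hpos := mul_pos hA hB
      have hsq : (-1 : ℝ) ^ e * (-1 : ℝ) ^ e = 1 := by rw [← mul_pow]; norm_num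
      have hkey : -((-1 : ℝ) ^ e) * eval (u i.castSucc) (P (k + 2)) *
          ((-1 : ℝ) ^ e * eval (u i.succ) (P (k + 2))) =
          -(eval (u i.castSucc) (P (k + 2)) * eval (u i.succ) (P (k + 2))) := by
        have h' : -((-1 : ℝ) ^ e) * eval (u i.castSucc) (P (k + 2)) *
            ((-1 : ℝ) ^ e * eval (u i.succ) (P (k + 2))) =
            -(((-1 : ℝ) ^ e * (-1 : ℝ) ^ e) *
              (eval (u i.castSucc) (P (k + 2)) * eval (u i.succ) (P (k + 2)))) := by ring
        rw [h', hsq, one_mul]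
      rw [hkey] at hpos
      exact exists_root_Ioo (P (k + 2)) hab (by linarith)
    choose t ht using hroot
    have ht1 : ∀ i, u i.castSucc < t i := fun i => (ht i).1.1
    have ht2 : ∀ i, t i < u i.succ := fun i => (ht i).1.2
    have ht0 : ∀ i, eval (t i) (P (k + 2)) = 0 := fun i => (ht i).2
    have htmono : StrictMono t := by
      intro a b hab
      calc t a < u a.succ := ht2 a
        _ ≤ u b.castSucc := humono.monotone (by
            rw [Fin.le_def, Fin.val_succ, Fin.coe_castSucc]
            have := Fin.lt_def.mp hab; omega)
        _ < t b := ht1 b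
    have htP : P (k + 2) = ∏ i, (X - C (t i)) :=
      eq_prod_of_roots hQmonic hQdeg htmono.injective ht0
    refine ⟨s, t, hs, htmono, ?_, hsP, htP, ?_⟩
    · have h := ht1 0
      rwa [Fin.castSucc_zero, hu0] at h
    · intro i
      constructor
      · have h := ht2 i.castSucc
        rwa [huC i] at h
      · have h := ht1 i.succ
        rwa [← Fin.succ_castSucc, huC i] at h

/-- Interlacing of the zeros of consecutive L-orthogonal polynomials. -/
theorem zeros_interlacing (c lam : ℕ → ℝ)
    (hc : ∀ n, 0 < c n) (hlam : ∀ n, 0 < lam n)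
    (P : ℕ → Polynomial ℝ)
    (hP0 : P 0 = 1) (hP1 : P 1 = X - C (c 0))
    (hP : ∀ n, P (n + 2) = (X - C (c (n + 1))) * P (n + 1) - C (lam (n + 1)) * X * P n)
    (n : ℕ) (hn : 1 ≤ n)
    (r : Fin n → ℝ) (hr : StrictMono r) (hrP : P n = ∏ i, (X - C (r i)))
    (s : Fin (n + 1) → ℝ) (hs : StrictMono s) (hsP : P (n + 1) = ∏ i, (X - C (s i))) :
    0 < s 0 ∧ ∀ i : Fin n, s i.castSucc < r i ∧ r i < s i.succ := by
  obtain ⟨r₀, s₀, hr₀, hs₀, hs00, hrP₀, hsP₀, hint₀⟩ :=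
    key_package c lam hc hlam P hP0 hP1 hP n
  have hre : r = r₀ := strictMono_prod_inj hr hr₀ (hrP.symm.trans hrP₀)
  have hse : s = s₀ := strictMono_prod_inj hs hs₀ (hsP.symm.trans hsP₀)
  subst hre hse
  exact ⟨hs00, hint₀⟩
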